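/- Let P_q be the space of real polynomials of degree ≤ q with inner product ⟨a|b⟩ = ∫_Ω w(x)a(x)b(x)dx for a positive weight w on Ω ⊂ ℝ, and let χ: P_q → P_q be the self-adjoint operator p ↦ Π_q(xp), where Π_q is orthogonal projection from P_{q+1} onto P_q. If {u_i} is an orthonormal eigenbasis of χ with χu_i = Λ_i u_i, then for every polynomial p of degree ≤ q+1, ⟨p|u_i⟩ = ⟨1|u_i⟩ · p(Λ_i). -/
import Mathlib


open MeasureTheory

/-- the δ lemma: if u is an eigenfunction of χ = Π_q ∘ (mult. by x)
with eigenvalue Λ, then for every polynomial p of degree ≤ q+1,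
⟨p|u⟩ = ⟨1|u⟩ · p(Λ). -/
theorem delta_lemma (q : ℕ) (μ : Measure ℝ)
    (hint : ∀ p : Polynomial ℝ, Integrable (fun x => p.eval x) μ)
    (u : Polynomial ℝ) (hu : u.natDegree ≤ q) (Λ : ℝ)
    (heig : ∀ p : Polynomial ℝ, p.natDegree ≤ q →
      ∫ x, (x * u.eval x - Λ * u.eval x) * p.eval x ∂μ = 0) :
    ∀ p : Polynomial ℝ, p.natDegree ≤ q + 1 →
      ∫ x, p.eval x * u.eval x ∂μ = (∫ x, u.eval x ∂μ) * p.eval Λ := by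
  intro p hp
  have hroot : (Polynomial.X - Polynomial.C Λ) ∣ (p - Polynomial.C (p.eval Λ)) := by
    apply Polynomial.dvd_iff_isRoot.mpr
    simp [Polynomial.IsRoot]
  obtain ⟨r, hr⟩ := hroot
  have hrdeg : r.natDegree ≤ q := by
    by_cases h0 : r = 0
    · simp [h0]
    · have h1 : (p - Polynomial.C (p.eval Λ)).natDegree ≤ q + 1 :=
        le_trans (Polynomial.natDegree_sub_le _ _)
          (by simp [hp, Polynomial.natDegree_C])
      rw [hr, Polynomial.natDegree_mul (Polynomial.X_sub_C_ne_zero Λ) h0,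
        Polynomial.natDegree_X_sub_C] at h1
      omega
  have heval : ∀ x : ℝ, p.eval x = p.eval Λ + (x - Λ) * r.eval x := by
    intro x
    have := congrArg (Polynomial.eval x) hr
    simp at this
    linarith
  have hiu := hint u
  have h2 : Integrable (fun x => (x - Λ) * r.eval x * u.eval x) μ := by
    have := hint ((Polynomial.X - Polynomial.C Λ) * r * u)
    simpa using this
  have h3 : ∫ x, (x - Λ) * r.eval x * u.eval x ∂μ = 0 := by
    have := heig r hrdeg
    rw [← this]
    congr 1; funext x; ring
  calc ∫ x, p.eval x * u.eval x ∂μ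
      = ∫ x, (p.eval Λ * u.eval x + (x - Λ) * r.eval x * u.eval x) ∂μ := by
        congr 1; funext x; rw [heval x]; ring
    _ = p.eval Λ * ∫ x, u.eval x ∂μ + ∫ x, (x - Λ) * r.eval x * u.eval x ∂μ := by
        rw [integral_add (hiu.const_mul _) h2, MeasureTheory.integral_const_mul]
    _ = (∫ x, u.eval x ∂μ) * p.eval Λ := by rw [h3]; ring
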